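/- For Z a standard normal random variable and any λ > 0, the identity E[tanh(λ + √λ Z)] = E[tanh²(λ + √λ Z)] holds. -/

import Mathlib

open MeasureTheory ProbabilityTheory Real Filter
open scoped ENNReal NNReal

/-- The standard Gaussian measure on ℝ. -/
noncomputable def stdGaussian : Measure ℝ := gaussianReal 0 1

lemma continuous_tanh' : Continuous Real.tanh := by
  have : Real.tanh = fun x => Real.sinh x / Real.cosh x := by
    funext x; exact Real.tanh_eq_sinh_div_cosh x
  rw [this]
  exact Real.continuous_sinh.div Real.continuous_cosh fun x => (Real.cosh_pos x).ne'

lemma abs_tanh_le_one (x : ℝ) : |Real.tanh x| ≤ 1 := by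
  rw [Real.tanh_eq_sinh_div_cosh, abs_div, abs_of_pos (Real.cosh_pos x),
    div_le_one (Real.cosh_pos x)]
  rw [Real.sinh_eq, Real.cosh_eq, abs_div]
  have h1 := Real.exp_pos x
  have h2 := Real.exp_pos (-x)
  rw [abs_of_pos (by norm_num : (0:ℝ) < 2)]
  rw [div_le_div_iff_of_pos_right (by norm_num : (0:ℝ) < 2)]
  cases abs_cases (Real.exp x - Real.exp (-x)) with
  | inl h => rw [h.1]; linarith
  | inr h => rw [h.1]; linarith

lemma one_sub_tanh (x : ℝ) : 1 - Real.tanh x = Real.exp (-(2*x)) * (1 + Real.tanh x) := by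
  rw [Real.tanh_eq_sinh_div_cosh, Real.sinh_eq, Real.cosh_eq]
  have h : Real.exp x + Real.exp (-x) > 0 := by positivity
  have h1 : Real.exp (-x) * Real.exp x = 1 := by rw [← Real.exp_add]; simp
  field_simp
  rw [show -(x*2) = -x + -x by ring, Real.exp_add]
  nlinarith [h1]

lemma integral_stdGaussian (g : ℝ → ℝ) :
    ∫ z, g z ∂stdGaussian = ∫ z, gaussianPDFReal 0 1 z * g z := by
  rw [_root_.stdGaussian, gaussianReal_of_var_ne_zero _ one_ne_zero]
  have : gaussianPDF 0 1 = fun x => ((gaussianPDFReal 0 1 x).toNNReal : ℝ≥0∞) := by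
    funext x; rfl
  rw [this, integral_withDensity_eq_integral_smul
    ((measurable_gaussianPDFReal 0 1).real_toNNReal) g]
  congr 1
  funext x
  rw [NNReal.smul_def, smul_eq_mul, Real.coe_toNNReal _ (gaussianPDFReal_nonneg 0 1 x)]

/-- Nishimori identity: for `Z ~ N(0,1)` and any `λ > 0`,
`E[tanh (λ + √λ Z)] = E[tanh² (λ + √λ Z)]`. -/
theorem tanh_eq_tanh_sq (l : ℝ) (hl : 0 < l) :
    ∫ z, Real.tanh (l + Real.sqrt l * z) ∂stdGaussian =
      ∫ z, Real.tanh (l + Real.sqrt l * z) ^ 2 ∂stdGaussian := by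
  set c := Real.sqrt l with hc_def
  have hc2 : c ^ 2 = l := Real.sq_sqrt hl.le
  -- the density-weighted integrand
  set F : ℝ → ℝ := fun z =>
    gaussianPDFReal 0 1 z * (Real.tanh (l + c * z) - Real.tanh (l + c * z) ^ 2) with hF
  -- key pointwise symmetry
  have hpdf : ∀ z : ℝ, gaussianPDFReal 0 1 (-(z + 2 * c)) =
      gaussianPDFReal 0 1 z * Real.exp (-(2 * (l + c * z))) := by
    intro z
    simp only [gaussianPDFReal, NNReal.coe_one, mul_one, sub_zero]
    rw [mul_assoc, ← Real.exp_add]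
    congr 1
    rw [Real.exp_eq_exp]
    linear_combination (-2 : ℝ) * hc2
  have hkey : ∀ z : ℝ, F (-(z + 2 * c)) = -F z := by
    intro z
    have hx : l + c * -(z + 2 * c) = -(l + c * z) := by nlinarith [hc2]
    simp only [hF, hx, hpdf z, Real.tanh_neg]
    have h1 := one_sub_tanh (l + c * z)
    set t := Real.tanh (l + c * z)
    set e := Real.exp (-(2 * (l + c * z)))
    set p := gaussianPDFReal 0 1 z
    -- need : p * e * (-t - t^2) = -(p * (t - t^2))
    linear_combination (p * t) * h1
  -- the integral of F is zero
  have hzero : ∫ z, F z = 0 := by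
    have h1 : ∫ z, F (-(z + 2 * c)) = ∫ z, F z := by
      have ha := MeasureTheory.integral_add_right_eq_self (μ := volume)
        (fun y => F (-y)) (2 * c)
      have hb := MeasureTheory.integral_neg_eq_self (μ := volume) F
      simpa using ha.trans hb
    have h2 : ∫ z, F (-(z + 2 * c)) = -∫ z, F z := by
      simp_rw [hkey]; exact integral_neg _
    linarith [h1.symm.trans h2]
  -- integrability
  have hmeas : Continuous fun z => Real.tanh (l + c * z) :=
    continuous_tanh'.comp (continuous_const.add (continuous_const.mul continuous_id))
  have hint1 : Integrable (fun z => gaussianPDFReal 0 1 z * Real.tanh (l + c * z)) := by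
    refine (integrable_gaussianPDFReal 0 1).bdd_mul (c := 1)
      hmeas.aestronglyMeasurable ?_ |>.congr ?_
    · exact Filter.Eventually.of_forall fun z => by
        simpa [Real.norm_eq_abs] using abs_tanh_le_one (l + c * z)
    · exact Filter.Eventually.of_forall fun z => mul_comm _ _
  have hint2 : Integrable (fun z => gaussianPDFReal 0 1 z * Real.tanh (l + c * z) ^ 2) := by
    refine (integrable_gaussianPDFReal 0 1).bdd_mul (c := 1)
      ((hmeas.pow 2).aestronglyMeasurable) ?_ |>.congr ?_
    · exact Filter.Eventually.of_forall fun z => by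
        have := abs_tanh_le_one (l + c * z)
        rw [Real.norm_eq_abs, Pi.pow_apply, abs_pow]
        calc |Real.tanh (l + c * z)| ^ 2 ≤ 1 ^ 2 := by
              exact pow_le_pow_left₀ (abs_nonneg _) this 2
          _ = 1 := one_pow 2
    · exact Filter.Eventually.of_forall fun z => mul_comm _ _
  -- conclude
  rw [integral_stdGaussian, integral_stdGaussian]
  have hsub : ∫ z, F z =
      (∫ z, gaussianPDFReal 0 1 z * Real.tanh (l + c * z)) -
      ∫ z, gaussianPDFReal 0 1 z * Real.tanh (l + c * z) ^ 2 := by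
    rw [← integral_sub hint1 hint2]
    congr 1; funext z; simp [hF, mul_sub]
  rw [hsub] at hzero
  linarith
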